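/- Let V₊ and V₋ be finite-dimensional real vector spaces equipped with symmetric bilinear forms q₊ and q₋, with q₊ positive definite and q₋ negative definite. Let U be a finite-dimensional real vector space and g₊ : U → V₊, g₋ : U → V₋ linear maps. Then for all but finitely many real numbers a, the bilinear form q₊ ⊕ q₋ on V₊ × V₋ restricts to a nondegenerate form on the image of the map u ↦ (a·g₊(u), g₋(u)). -/

import Mathlib

set_option maxHeartbeats 1000000

open Polynomial in
/-- Let `V₊`, `V₋` be finite-dimensional real vector spaces with a positive definite
symmetric bilinear form `q₊` and a negative definite symmetric bilinear form `q₋`,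
and let `g₊ : U → V₊`, `g₋ : U → V₋` be linear maps from a finite-dimensional real
vector space `U`.  Then for all but finitely many `a : ℝ`, the form
`q₊ ⊕ q₋` on `V₊ × V₋` is nondegenerate on the image of `u ↦ (a • g₊ u, g₋ u)`. -/
theorem nondegenerate_on_image_for_almost_all
    (U Vp Vm : Type*)
    [AddCommGroup U] [Module ℝ U] [FiniteDimensional ℝ U]
    [AddCommGroup Vp] [Module ℝ Vp] [FiniteDimensional ℝ Vp]
    [AddCommGroup Vm] [Module ℝ Vm] [FiniteDimensional ℝ Vm]
    (qp : LinearMap.BilinForm ℝ Vp) (qm : LinearMap.BilinForm ℝ Vm)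
    (hqp_symm : qp.IsSymm) (hqm_symm : qm.IsSymm)
    (hqp_pos : ∀ v : Vp, v ≠ 0 → 0 < qp v v)
    (hqm_neg : ∀ v : Vm, v ≠ 0 → qm v v < 0)
    (gp : U →ₗ[ℝ] Vp) (gm : U →ₗ[ℝ] Vm) :
    {a : ℝ | ¬ ∀ w ∈ Set.range (fun u : U => (a • gp u, gm u)),
        (∀ w' ∈ Set.range (fun u : U => (a • gp u, gm u)),
          qp w.1 w'.1 + qm w.2 w'.2 = 0) → w = 0}.Finite := by
  classical
  -- nonpositivity / nonnegativity facts
  have hqp_nonneg : ∀ v : Vp, 0 ≤ qp v v := by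
    intro v
    rcases eq_or_ne v 0 with rfl | hv
    · simp
    · exact (hqp_pos v hv).le
  have hqm_nonpos : ∀ v : Vm, qm v v ≤ 0 := by
    intro v
    rcases eq_or_ne v 0 with rfl | hv
    · simp
    · exact (hqm_neg v hv).le
  set K : Submodule ℝ U := LinearMap.ker gp ⊓ LinearMap.ker gm with hKdef
  obtain ⟨W, hW⟩ := Submodule.exists_isCompl K
  -- the two pulled-back forms on W
  set Pw : LinearMap.BilinForm ℝ W :=
    qp.compl₁₂ (gp ∘ₗ W.subtype) (gp ∘ₗ W.subtype) with hPw
  set Mw : LinearMap.BilinForm ℝ W :=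
    qm.compl₁₂ (gm ∘ₗ W.subtype) (gm ∘ₗ W.subtype) with hMw
  have hPw_apply : ∀ x y : W, Pw x y = qp (gp (x : U)) (gp (y : U)) := fun x y => rfl
  have hMw_apply : ∀ x y : W, Mw x y = qm (gm (x : U)) (gm (y : U)) := fun x y => rfl
  -- a vector of W mapped to zero by both gp and gm is zero
  have hzero : ∀ x : W, gp (x : U) = 0 → gm (x : U) = 0 → x = 0 := by
    intro x h1 h2
    have hxK : (x : U) ∈ K := by
      rw [hKdef]
      exact ⟨h1, h2⟩
    have : (x : U) ∈ K ⊓ W := ⟨hxK, x.2⟩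
    rw [hW.inf_eq_bot] at this
    exact Subtype.ext this
  obtain ⟨n, b⟩ : ∃ n : ℕ, Nonempty (Module.Basis (Fin n) ℝ W) :=
    ⟨Module.finrank ℝ W, ⟨Module.finBasis ℝ W⟩⟩
  obtain ⟨b⟩ := b
  set GP : Matrix (Fin n) (Fin n) ℝ := LinearMap.BilinForm.toMatrix b Pw with hGP
  set GM : Matrix (Fin n) (Fin n) ℝ := LinearMap.BilinForm.toMatrix b Mw with hGM
  -- the characteristic polynomial in `t`
  set q : Polynomial ℝ :=
    (Matrix.of fun i j => C (GP i j) * X + C (GM i j)).det with hq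
  have hq_eval : ∀ t : ℝ, q.eval t = (t • GP + GM).det := by
    intro t
    have h1 := RingHom.map_det (Polynomial.evalRingHom t)
      (Matrix.of fun i j => C (GP i j) * X + C (GM i j))
    rw [hq]
    refine Eq.trans h1 ?_
    congr 1
    ext i j
    simp only [RingHom.mapMatrix_apply, Matrix.map_apply, Matrix.of_apply,
      Polynomial.coe_evalRingHom, Polynomial.eval_add, Polynomial.eval_mul,
      Polynomial.eval_C, Polynomial.eval_X, Matrix.add_apply, Matrix.smul_apply,
      smul_eq_mul]
    ring
  -- the form `t • Pw + Mw` is nondegenerate whenever `q.eval t ≠ 0`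
  have key : ∀ t : ℝ, q.eval t ≠ 0 →
      ∀ x : W, (∀ y : W, (t • Pw + Mw) x y = 0) → x = 0 := by
    intro t ht
    have hdet : (LinearMap.BilinForm.toMatrix b (t • Pw + Mw)).det ≠ 0 := by
      have : LinearMap.BilinForm.toMatrix b (t • Pw + Mw) = t • GP + GM := by
        rw [hGP, hGM, map_add, map_smul]
      rw [this, ← hq_eval]
      exact ht
    exact ((LinearMap.BilinForm.nondegenerate_iff_det_ne_zero b).mpr hdet).1
  -- the polynomial `q` is nonzero, since at `t = -1` the form is negative definite
  have hq_ne : q ≠ 0 := by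
    intro h0
    have hnd : ((-1 : ℝ) • Pw + Mw).Nondegenerate := by
      refine LinearMap.BilinForm.Nondegenerate.ofSeparatingLeft ?_
      intro x hx
      have hxx := hx x
      simp only [LinearMap.add_apply, LinearMap.smul_apply, smul_eq_mul,
        hPw_apply, hMw_apply, neg_one_mul] at hxx
      have hA := hqp_nonneg (gp (x : U))
      have hB := hqm_nonpos (gm (x : U))
      have h1 : qp (gp (x : U)) (gp (x : U)) = 0 ∧ qm (gm (x : U)) (gm (x : U)) = 0 := by
        constructor <;> linarith only [hxx, hA, hB]
      have hgp : gp (x : U) = 0 := by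
        by_contra hne
        exact absurd h1.1 (ne_of_gt (hqp_pos _ hne))
      have hgm : gm (x : U) = 0 := by
        by_contra hne
        exact absurd h1.2 (ne_of_lt (hqm_neg _ hne))
      exact hzero x hgp hgm
    have hdet := (LinearMap.BilinForm.nondegenerate_iff_det_ne_zero b).mp hnd
    apply hdet
    have : LinearMap.BilinForm.toMatrix b ((-1 : ℝ) • Pw + Mw) = (-1 : ℝ) • GP + GM := by
      rw [hGP, hGM, map_add, map_smul]
    rw [this, ← hq_eval, h0]
    simp
  -- the composed polynomial `q(a²)`
  set p : Polynomial ℝ := q.comp (X ^ 2) with hp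
  have hp_ne : p ≠ 0 := by
    intro h0
    rcases Polynomial.comp_eq_zero_iff.mp h0 with h | h
    · exact hq_ne h
    · have hX : (X : Polynomial ℝ) ^ 2 = C (((X : Polynomial ℝ) ^ 2).coeff 0) := h.2
      simp only [Polynomial.coeff_X_pow, if_neg (by norm_num : ¬(0 = 2)), map_zero] at hX
      exact pow_ne_zero 2 Polynomial.X_ne_zero hX
  refine Set.Finite.subset (Polynomial.finite_setOf_isRoot hp_ne) ?_
  intro a ha
  simp only [Set.mem_setOf_eq] at ha
  by_contra hroot
  apply ha
  have hqa : q.eval (a ^ 2) ≠ 0 := by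
    intro h
    apply hroot
    simp only [hp, Polynomial.IsRoot, Polynomial.eval_comp, Polynomial.eval_pow,
      Polynomial.eval_X]
    exact h
  have hsep := key (a ^ 2) hqa
  rintro w ⟨u, rfl⟩ h
  -- decompose u = k + x with k ∈ K, x ∈ W
  have hu : u ∈ K ⊔ W := by rw [hW.sup_eq_top]; trivial
  obtain ⟨k, hk, x0, hx0, rfl⟩ := Submodule.mem_sup.mp hu
  obtain ⟨hk1, hk2⟩ : gp k = 0 ∧ gm k = 0 := by
    rw [hKdef] at hk
    exact ⟨hk.1, hk.2⟩
  have hgpu : gp (k + x0) = gp x0 := by rw [map_add, hk1, zero_add]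
  have hgmu : gm (k + x0) = gm x0 := by rw [map_add, hk2, zero_add]
  have hxzero : (⟨x0, hx0⟩ : W) = 0 := by
    apply hsep
    intro y
    have h' := h (a • gp (y : U), gm (y : U)) ⟨(y : U), rfl⟩
    simp only [map_smul, LinearMap.smul_apply, smul_eq_mul] at h'
    rw [hgpu, hgmu] at h'
    simp only [LinearMap.add_apply, LinearMap.smul_apply, smul_eq_mul,
      hPw_apply, hMw_apply]
    linear_combination h'
  have hx0zero : x0 = 0 := congrArg Subtype.val hxzero
  have hgp0 : gp (k + x0) = 0 := by rw [hx0zero, map_add, hk1, map_zero, add_zero]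
  have hgm0 : gm (k + x0) = 0 := by rw [hx0zero, map_add, hk2, map_zero, add_zero]
  simp [hgp0, hgm0, Prod.ext_iff]
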